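/- Let κ be a field. The κ-algebra homomorphism κ[[a,b,c]]/(a² − b³) → κ[[u,v]] defined by a ↦ u³, b ↦ u², c ↦ v is injective, with image the subring κ[[u², u³, v]]. Moreover, a power series f(u,v) ∈ κ[[u,v]] lies in κ[[u², u³, v]] if and only if its image in κ[[u,v]]/(u²) lies in the image of κ[[v]]. -/

import Mathlib

noncomputable section

/-- The effect of the substitution `a ↦ u³, b ↦ u², c ↦ v` on exponent vectors. -/
def expMap7 (d : Fin 3 →₀ ℕ) : Fin 2 →₀ ℕ :=
  d 0 • Finsupp.single 0 3 + d 1 • Finsupp.single 0 2 + d 2 • Finsupp.single 1 1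

/-- `φ : κ[[a,b,c]] → κ[[u,v]]` is the substitution homomorphism `a ↦ u³`, `b ↦ u²`, `c ↦ v`
precisely when its coefficients are given by the evident formula. -/
def IsSubstHom7 (κ : Type*) [Field κ]
    (φ : MvPowerSeries (Fin 3) κ →ₐ[κ] MvPowerSeries (Fin 2) κ) : Prop :=
  ∀ (f : MvPowerSeries (Fin 3) κ) (e : Fin 2 →₀ ℕ),
    MvPowerSeries.coeff e (φ f) =
      ∑ᶠ d : Fin 3 →₀ ℕ, if expMap7 d = e then MvPowerSeries.coeff d f else 0

/-- The complete monomial subring `κ[[u², u³, v]] ⊆ κ[[u,v]]`. -/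
def monomialSubring7 (κ : Type*) [Field κ] : Set (MvPowerSeries (Fin 2) κ) :=
  {f | ∀ d : Fin 2 →₀ ℕ, MvPowerSeries.coeff d f ≠ 0 →
    d ∈ AddSubmonoid.closure ({Finsupp.single 0 2, Finsupp.single 0 3,
      Finsupp.single 1 1} : Set (Fin 2 →₀ ℕ))}

/-- The set of power series lying in the one-variable subring `κ[[v]] ⊆ κ[[u,v]]`. -/
def onlyV (κ : Type*) [Field κ] : Set (MvPowerSeries (Fin 2) κ) :=
  {g | ∀ d : Fin 2 →₀ ℕ, MvPowerSeries.coeff d g ≠ 0 → d 0 = 0}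

/-! ### Auxiliary material -/

open Finsupp

/-- A `Fin 3 →₀ ℕ` triple. -/
def tri7 (a b c : ℕ) : Fin 3 →₀ ℕ := single 0 a + single 1 b + single 2 c

/-- A `Fin 2 →₀ ℕ` pair. -/
def pr7 (a b : ℕ) : Fin 2 →₀ ℕ := single 0 a + single 1 b

@[simp] lemma tri7_apply0 (a b c : ℕ) : tri7 a b c 0 = a := by
  simp [tri7, Finsupp.single_apply]
@[simp] lemma tri7_apply1 (a b c : ℕ) : tri7 a b c 1 = b := by
  simp [tri7, Finsupp.single_apply]
@[simp] lemma tri7_apply2 (a b c : ℕ) : tri7 a b c 2 = c := by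
  simp [tri7, Finsupp.single_apply]
@[simp] lemma pr7_apply0 (a b : ℕ) : pr7 a b 0 = a := by
  simp [pr7, Finsupp.single_apply]
@[simp] lemma pr7_apply1 (a b : ℕ) : pr7 a b 1 = b := by
  simp [pr7, Finsupp.single_apply]

lemma eq_tri7 (d : Fin 3 →₀ ℕ) : d = tri7 (d 0) (d 1) (d 2) := by
  ext a; fin_cases a <;> simp

lemma eq_pr7 (e : Fin 2 →₀ ℕ) : e = pr7 (e 0) (e 1) := by
  ext a; fin_cases a <;> simp

lemma tri7_congr {a b c a' b' c' : ℕ} (h1 : a = a') (h2 : b = b') (h3 : c = c') :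
    tri7 a b c = tri7 a' b' c' := by rw [h1, h2, h3]

@[simp] lemma expMap7_apply0 (d : Fin 3 →₀ ℕ) : expMap7 d 0 = 3 * d 0 + 2 * d 1 := by
  simp [expMap7, Finsupp.single_apply, mul_comm]

@[simp] lemma expMap7_apply1 (d : Fin 3 →₀ ℕ) : expMap7 d 1 = d 2 := by
  simp [expMap7, Finsupp.single_apply]

lemma expMap7_eq_iff {d : Fin 3 →₀ ℕ} {e : Fin 2 →₀ ℕ} :
    expMap7 d = e ↔ 3 * d 0 + 2 * d 1 = e 0 ∧ d 2 = e 1 := by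
  constructor
  · intro h
    constructor
    · rw [← h]; simp
    · rw [← h]; simp
  · rintro ⟨h1, h2⟩
    ext a; fin_cases a
    · simpa using h1
    · simpa using h2

/-- The submonoid of exponents avoiding first coordinate `1`. -/
def notOne7 : AddSubmonoid (Fin 2 →₀ ℕ) where
  carrier := {d | d 0 ≠ 1}
  zero_mem' := by simp
  add_mem' := by
    intro a b ha hb
    simp only [Set.mem_setOf_eq, Finsupp.add_apply] at *
    omega

lemma mem_closure7_iff (d : Fin 2 →₀ ℕ) :
    d ∈ AddSubmonoid.closure ({Finsupp.single 0 2, Finsupp.single 0 3,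
      Finsupp.single 1 1} : Set (Fin 2 →₀ ℕ)) ↔ d 0 ≠ 1 := by
  constructor
  · intro h
    have : d ∈ notOne7 := by
      refine AddSubmonoid.closure_le.mpr ?_ h
      rintro x (rfl | rfl | rfl) <;> simp [notOne7, Finsupp.single_apply]
    exact this
  · intro h
    set C := AddSubmonoid.closure ({Finsupp.single 0 2, Finsupp.single 0 3,
      Finsupp.single 1 1} : Set (Fin 2 →₀ ℕ)) with hC
    have mem1 : (single (0 : Fin 2) 2) ∈ C := AddSubmonoid.subset_closure (Set.mem_insert _ _)
    have mem2 : (single (0 : Fin 2) 3) ∈ C :=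
      AddSubmonoid.subset_closure (Set.mem_insert_of_mem _ (Set.mem_insert _ _))
    have mem3 : (single (1 : Fin 2) 1) ∈ C :=
      AddSubmonoid.subset_closure (Set.mem_insert_of_mem _ (Set.mem_insert_of_mem _ rfl))
    have hmul : ∀ k : ℕ, single (0 : Fin 2) (2 * k) ∈ C := by
      intro k
      induction k with
      | zero => simpa using AddSubmonoid.zero_mem C
      | succ n ih =>
        have : single (0 : Fin 2) (2 * (n + 1)) = single 0 (2 * n) + single 0 2 := by
          ext a
          simp only [Finsupp.single_apply, Finsupp.add_apply]
          split_ifs <;> omega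
        rw [this]
        exact AddSubmonoid.add_mem _ ih mem1
    have hv : ∀ n : ℕ, single (1 : Fin 2) n ∈ C := by
      intro n
      induction n with
      | zero => simpa using AddSubmonoid.zero_mem C
      | succ n ih =>
        have : single (1 : Fin 2) (n + 1) = single 1 n + single 1 1 := by
          rw [← Finsupp.single_add]
        rw [this]
        exact AddSubmonoid.add_mem _ ih mem3
    have h2 : single (0 : Fin 2) (d 0) ∈ C := by
      rcases Nat.even_or_odd (d 0) with he | ho
      · obtain ⟨k, hk⟩ := he
        have : single (0 : Fin 2) (d 0) = single 0 (2 * k) := by rw [hk]; congr 1; omega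
        rw [this]; exact hmul k
      · obtain ⟨k, hk⟩ := ho
        have hk1 : 1 ≤ k := by omega
        have : single (0 : Fin 2) (d 0) = single 0 3 + single 0 (2 * (k - 1)) := by
          rw [← Finsupp.single_add]; congr 1; omega
        rw [this]
        exact AddSubmonoid.add_mem _ mem2 (hmul _)
    have hd : d = single (0 : Fin 2) (d 0) + single (1 : Fin 2) (d 1) := eq_pr7 d
    rw [hd]
    exact AddSubmonoid.add_mem _ h2 (hv _)

/-- The unique preimage of `e` under `expMap7` with first coordinate `≤ 1`. -/
def dLow7 (e : Fin 2 →₀ ℕ) : Fin 3 →₀ ℕ :=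
  if 2 ∣ e 0 then tri7 0 (e 0 / 2) (e 1) else tri7 1 ((e 0 - 3) / 2) (e 1)

lemma dLow7_apply0_le (e : Fin 2 →₀ ℕ) : dLow7 e 0 ≤ 1 := by
  unfold dLow7; split <;> simp

lemma expMap7_dLow7 {e : Fin 2 →₀ ℕ} (he : e 0 ≠ 1) : expMap7 (dLow7 e) = e := by
  unfold dLow7
  split <;> (rw [expMap7_eq_iff]; constructor <;> simp <;> omega)

lemma expMap7_ne_of_one {e : Fin 2 →₀ ℕ} (he : e 0 = 1) (d : Fin 3 →₀ ℕ) :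
    expMap7 d ≠ e := by
  intro h
  obtain ⟨h1, -⟩ := expMap7_eq_iff.mp h
  omega

lemma eq_dLow7 {d : Fin 3 →₀ ℕ} {e : Fin 2 →₀ ℕ} (h : expMap7 d = e) (hd : d 0 ≤ 1) :
    d = dLow7 e := by
  obtain ⟨h1, h2⟩ := expMap7_eq_iff.mp h
  unfold dLow7
  by_cases hdvd : 2 ∣ e 0
  · rw [if_pos hdvd]
    have e0 : d 0 = 0 := by omega
    have e1 : d 1 = e 0 / 2 := by omega
    rw [eq_tri7 d, e0, e1, h2]
  · rw [if_neg hdvd]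
    have e0 : d 0 = 1 := by omega
    have e1 : d 1 = (e 0 - 3) / 2 := by omega
    rw [eq_tri7 d, e0, e1, h2]

section Coeffs

variable {κ : Type*} [Field κ]

lemma coeff_phi_low {φ : MvPowerSeries (Fin 3) κ →ₐ[κ] MvPowerSeries (Fin 2) κ}
    (hφ : IsSubstHom7 κ φ) {f : MvPowerSeries (Fin 3) κ}
    (hf : ∀ d : Fin 3 →₀ ℕ, 2 ≤ d 0 → MvPowerSeries.coeff d f = 0) (e : Fin 2 →₀ ℕ) :
    MvPowerSeries.coeff e (φ f) =
      if e 0 = 1 then 0 else MvPowerSeries.coeff (dLow7 e) f := by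
  rw [hφ]
  split_ifs with he
  · exact finsum_eq_zero_of_forall_eq_zero fun d => if_neg (expMap7_ne_of_one he d)
  · rw [finsum_eq_single _ (dLow7 e) ?_, if_pos (expMap7_dLow7 he)]
    intro d hd
    by_cases h1 : expMap7 d = e
    · rw [if_pos h1]
      apply hf
      by_contra hlt
      exact hd (eq_dLow7 h1 (by omega))
    · rw [if_neg h1]

lemma phi_rel {φ : MvPowerSeries (Fin 3) κ →ₐ[κ] MvPowerSeries (Fin 2) κ}
    (hφ : IsSubstHom7 κ φ) :
    φ ((MvPowerSeries.X 0) ^ 2 - (MvPowerSeries.X 1) ^ 3) = 0 := by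
  classical
  apply MvPowerSeries.ext
  intro e
  rw [map_zero, hφ]
  have hco : ∀ d : Fin 3 →₀ ℕ,
      MvPowerSeries.coeff d ((MvPowerSeries.X 0 : MvPowerSeries (Fin 3) κ) ^ 2 -
        (MvPowerSeries.X 1) ^ 3) =
      (if d = single 0 2 then (1 : κ) else 0) - (if d = single 1 3 then (1 : κ) else 0) := by
    intro d
    rw [map_sub, MvPowerSeries.coeff_X_pow, MvPowerSeries.coeff_X_pow]
  have key : ∀ d : Fin 3 →₀ ℕ,
      (if expMap7 d = e then MvPowerSeries.coeff d ((MvPowerSeries.X 0 :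
          MvPowerSeries (Fin 3) κ) ^ 2 - (MvPowerSeries.X 1) ^ 3) else 0) =
      (if expMap7 d = e then (if d = single 0 2 then (1 : κ) else 0) else 0) -
      (if expMap7 d = e then (if d = single 1 3 then (1 : κ) else 0) else 0) := by
    intro d
    rw [hco]
    split <;> simp
  rw [finsum_congr key, finsum_sub_distrib ?_ ?_]
  · rw [finsum_eq_single _ (single 0 2) ?_, finsum_eq_single _ (single 1 3) ?_]
    · have h23 : expMap7 (single (0 : Fin 3) 2) = expMap7 (single (1 : Fin 3) 3) := by
        rw [expMap7_eq_iff]; simp [Finsupp.single_apply]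
      rw [if_pos rfl, if_pos rfl]
      rw [h23]
      split <;> simp
    · intro d hd
      simp [hd]
    · intro d hd
      simp [hd]
  · apply Set.Finite.subset (Set.finite_singleton (single (0 : Fin 3) 2))
    intro d hd
    simp only [Function.mem_support, ne_eq] at hd
    rw [Set.mem_singleton_iff]
    by_contra h
    exact hd (by simp [h])
  · apply Set.Finite.subset (Set.finite_singleton (single (1 : Fin 3) 3))
    intro d hd
    simp only [Function.mem_support, ne_eq] at hd
    rw [Set.mem_singleton_iff]
    by_contra h
    exact hd (by simp [h])

end Coeffs

theorem substHom7_ker_range_cartesian (κ : Type*) [Field κ]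
    (φ : MvPowerSeries (Fin 3) κ →ₐ[κ] MvPowerSeries (Fin 2) κ) (hφ : IsSubstHom7 κ φ) :
    RingHom.ker φ.toRingHom =
      Ideal.span {(MvPowerSeries.X 0) ^ 2 - (MvPowerSeries.X 1) ^ 3} ∧
    Set.range φ = monomialSubring7 κ ∧
    (∀ f : MvPowerSeries (Fin 2) κ, f ∈ monomialSubring7 κ ↔
      ∃ g ∈ onlyV κ, f - g ∈ Ideal.span {(MvPowerSeries.X 0 : MvPowerSeries (Fin 2) κ) ^ 2}) := by
  classical
  set p : MvPowerSeries (Fin 3) κ :=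
    (MvPowerSeries.X 0) ^ 2 - (MvPowerSeries.X 1) ^ 3 with hp
  refine ⟨?_, ?_, ?_⟩
  · -- kernel
    apply le_antisymm
    · -- ker ⊆ span
      intro f hf
      rw [RingHom.mem_ker] at hf
      -- the explicit quotient series
      set hser : MvPowerSeries (Fin 3) κ := fun d =>
        ∑ t ∈ Finset.range (d 1 / 3 + 1),
          MvPowerSeries.coeff (tri7 (d 0 + 2 + 2 * t) (d 1 - 3 * t) (d 2)) f with hhser
      have hser_apply : ∀ d : Fin 3 →₀ ℕ, MvPowerSeries.coeff d hser =
          ∑ t ∈ Finset.range (d 1 / 3 + 1),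
            MvPowerSeries.coeff (tri7 (d 0 + 2 + 2 * t) (d 1 - 3 * t) (d 2)) f := by
        intro d; rfl
      have main : ∀ d : Fin 3 →₀ ℕ, 2 ≤ d 0 →
          MvPowerSeries.coeff d (f - p * hser) = 0 := by
        intro d hd2
        rw [map_sub, hp, sub_mul, map_sub, MvPowerSeries.X_pow_eq, MvPowerSeries.X_pow_eq,
          MvPowerSeries.coeff_monomial_mul, MvPowerSeries.coeff_monomial_mul]
        have hA : Finsupp.single (0 : Fin 3) 2 ≤ d := Finsupp.single_le_iff.mpr hd2
        rw [if_pos hA, one_mul]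
        have hA0 : (d - Finsupp.single (0 : Fin 3) 2 : Fin 3 →₀ ℕ) 0 = d 0 - 2 := by
          rw [Finsupp.tsub_apply]; simp [Finsupp.single_apply]
        have hA1 : (d - Finsupp.single (0 : Fin 3) 2 : Fin 3 →₀ ℕ) 1 = d 1 := by
          rw [Finsupp.tsub_apply]; simp [Finsupp.single_apply]
        have hA2 : (d - Finsupp.single (0 : Fin 3) 2 : Fin 3 →₀ ℕ) 2 = d 2 := by
          rw [Finsupp.tsub_apply]; simp [Finsupp.single_apply]
        have hvalA : MvPowerSeries.coeff (d - Finsupp.single (0 : Fin 3) 2) hser =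
            ∑ t ∈ Finset.range (d 1 / 3 + 1),
              MvPowerSeries.coeff (tri7 (d 0 + 2 * t) (d 1 - 3 * t) (d 2)) f := by
          rw [hser_apply, hA0, hA1, hA2]
          apply Finset.sum_congr rfl
          intro t _
          rw [tri7_congr (show d 0 - 2 + 2 + 2 * t = d 0 + 2 * t by omega) rfl rfl]
        rw [hvalA, Finset.sum_range_succ']
        by_cases h3 : 3 ≤ d 1
        · have hB : Finsupp.single (1 : Fin 3) 3 ≤ d := Finsupp.single_le_iff.mpr h3
          rw [if_pos hB, one_mul]
          have hB0 : (d - Finsupp.single (1 : Fin 3) 3 : Fin 3 →₀ ℕ) 0 = d 0 := by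
            rw [Finsupp.tsub_apply]; simp [Finsupp.single_apply]
          have hB1 : (d - Finsupp.single (1 : Fin 3) 3 : Fin 3 →₀ ℕ) 1 = d 1 - 3 := by
            rw [Finsupp.tsub_apply]; simp [Finsupp.single_apply]
          have hB2 : (d - Finsupp.single (1 : Fin 3) 3 : Fin 3 →₀ ℕ) 2 = d 2 := by
            rw [Finsupp.tsub_apply]; simp [Finsupp.single_apply]
          have hvalB : MvPowerSeries.coeff (d - Finsupp.single (1 : Fin 3) 3) hser =
              ∑ t ∈ Finset.range (d 1 / 3),
                MvPowerSeries.coeff (tri7 (d 0 + 2 * (t + 1)) (d 1 - 3 * (t + 1)) (d 2)) f := by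
            rw [hser_apply, hB0, hB1, hB2]
            have hcard : (d 1 - 3) / 3 + 1 = d 1 / 3 := by omega
            rw [hcard]
            apply Finset.sum_congr rfl
            intro t _
            rw [tri7_congr (show d 0 + 2 + 2 * t = d 0 + 2 * (t + 1) by ring)
              (show d 1 - 3 - 3 * t = d 1 - 3 * (t + 1) by omega) rfl]
          rw [hvalB]
          have htd : tri7 (d 0 + 2 * 0) (d 1 - 3 * 0) (d 2) = d := by
            rw [tri7_congr (show d 0 + 2 * 0 = d 0 by ring)
              (show d 1 - 3 * 0 = d 1 by omega) rfl]
            exact (eq_tri7 d).symm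
          rw [htd]
          ring
        · have hB : ¬ Finsupp.single (1 : Fin 3) 3 ≤ d := fun h =>
            h3 (Finsupp.single_le_iff.mp h)
          rw [if_neg hB]
          have hr : d 1 / 3 = 0 := by omega
          rw [hr]
          simp only [Finset.range_zero, Finset.sum_empty, zero_add]
          have htd : tri7 (d 0 + 2 * 0) (d 1 - 3 * 0) (d 2) = d := by
            rw [tri7_congr (show d 0 + 2 * 0 = d 0 by ring)
              (show d 1 - 3 * 0 = d 1 by omega) rfl]
            exact (eq_tri7 d).symm
          rw [htd]
          ring
      have hf' : φ f = 0 := hf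
      have hphir : φ (f - p * hser) = 0 := by
        rw [map_sub, map_mul, hf', phi_rel hφ, zero_mul, sub_zero]
      have hzero : f - p * hser = 0 := by
        apply MvPowerSeries.ext
        intro d
        rw [map_zero]
        by_cases hd : 2 ≤ d 0
        · exact main d hd
        · have hle : d 0 ≤ 1 := by omega
          have he1 : expMap7 d 0 ≠ 1 := by simp only [expMap7_apply0]; omega
          have := coeff_phi_low hφ main (expMap7 d)
          rw [hphir, map_zero, if_neg he1] at this
          rw [← eq_dLow7 rfl hle] at this
          exact this.symm
      rw [Ideal.mem_span_singleton]
      exact ⟨hser, by rw [← sub_eq_zero]; exact hzero⟩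
    · -- span ⊆ ker
      rw [Ideal.span_le]
      intro x hx
      rw [Set.mem_singleton_iff] at hx
      subst hx
      rw [SetLike.mem_coe, RingHom.mem_ker]
      exact phi_rel hφ
  · -- range
    apply Set.eq_of_subset_of_subset
    · rintro _ ⟨f, rfl⟩ e he
      rw [hφ] at he
      have : ∃ d : Fin 3 →₀ ℕ,
          (if expMap7 d = e then MvPowerSeries.coeff d f else 0) ≠ 0 := by
        by_contra hall
        push_neg at hall
        exact he (finsum_eq_zero_of_forall_eq_zero hall)
      obtain ⟨d, hd⟩ := this
      have hde : expMap7 d = e := by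
        by_contra h
        exact hd (if_neg h)
      rw [mem_closure7_iff, ← hde]
      simp
      omega
    · intro f hfmem
      set g : MvPowerSeries (Fin 3) κ := fun d =>
        if d 0 ≤ 1 then MvPowerSeries.coeff (expMap7 d) f else 0 with hg
      have hglow : ∀ d : Fin 3 →₀ ℕ, 2 ≤ d 0 → MvPowerSeries.coeff d g = 0 := by
        intro d hd
        show (if d 0 ≤ 1 then MvPowerSeries.coeff (expMap7 d) f else 0) = 0
        rw [if_neg (by omega)]
      refine ⟨g, ?_⟩
      apply MvPowerSeries.ext
      intro e
      rw [coeff_phi_low hφ hglow e]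
      split_ifs with he
      · symm
        by_contra hne
        have := mem_closure7_iff e |>.mp (hfmem e hne)
        exact this he
      · show (if (dLow7 e) 0 ≤ 1 then MvPowerSeries.coeff (expMap7 (dLow7 e)) f else 0) = _
        rw [if_pos (dLow7_apply0_le e), expMap7_dLow7 he]
  · -- cartesian square
    intro f
    constructor
    · intro hfmem
      set g : MvPowerSeries (Fin 2) κ := fun d =>
        if d 0 = 0 then MvPowerSeries.coeff d f else 0 with hg
      have hgapp : ∀ d : Fin 2 →₀ ℕ, MvPowerSeries.coeff d g =
          if d 0 = 0 then MvPowerSeries.coeff d f else 0 := fun d => rfl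
      refine ⟨g, ?_, ?_⟩
      · intro d hd
        by_contra h
        rw [hgapp, if_neg h] at hd
        exact hd rfl
      · rw [Ideal.mem_span_singleton, MvPowerSeries.X_pow_dvd_iff]
        intro m hm
        rw [map_sub, hgapp]
        rcases (by omega : m 0 = 0 ∨ m 0 = 1) with h0 | h1
        · rw [if_pos h0, sub_self]
        · rw [if_neg (by omega)]
          have : MvPowerSeries.coeff m f = 0 := by
            by_contra hne
            have := mem_closure7_iff m |>.mp (hfmem m hne)
            exact this h1
          rw [this, sub_zero]
    · rintro ⟨g, hgv, hspan⟩ d hd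
      rw [mem_closure7_iff]
      intro h1
      rw [Ideal.mem_span_singleton, MvPowerSeries.X_pow_dvd_iff] at hspan
      have hsub : MvPowerSeries.coeff d (f - g) = 0 := hspan d (by omega)
      have hgd : MvPowerSeries.coeff d g = 0 := by
        by_contra h
        exact absurd (hgv d h) (by omega)
      rw [map_sub, hgd, sub_zero] at hsub
      exact hd hsub
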